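/- Let G be a finite, connected graph and let v ∈ Λ be an equilibrium. Then the Jacobian matrix JF(v) has an eigenvalue with strictly positive real part if and only if there exists a coordinate i ∈ [m] with v_i = 0 and (∂L/∂v_i)(v) > 0. -/

import Mathlib

open MeasureTheory Filter Finset Topology

noncomputable section

namespace GPU

variable {m : ℕ}

/-- The vector field `F` of the ODE associated to the generalized Pólya urn,
`F_i(x) = -x_i + (1/N) ∑_{j ~ i} x_i/(x_i+x_j)` where `N` is the number of edges. -/
def polyaF (G : SimpleGraph (Fin m)) [DecidableRel G.Adj] (x : Fin m → ℝ) : Fin m → ℝ :=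
  fun i => -x i + (1 / (G.edgeFinset.card : ℝ)) * ∑ j ∈ G.neighborFinset i, x i / (x i + x j)

/-- The domain `Δ`. -/
def simplexDelta (G : SimpleGraph (Fin m)) (c : ℝ) : Set (Fin m → ℝ) :=
  {x | (∀ i, 0 ≤ x i) ∧ ∑ i, x i = 1 ∧ ∀ i j, G.Adj i j → c ≤ x i + x j}

/-- The equilibria set `Λ = {x ∈ Δ : F(x) = 0}`. -/
def equilibria (G : SimpleGraph (Fin m)) [DecidableRel G.Adj] (c : ℝ) : Set (Fin m → ℝ) :=
  {x | x ∈ simplexDelta G c ∧ polyaF G x = 0}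

/-- The Lyapunov function `L(v) = -∑ v_i + (1/N) ∑_{{i,j} ∈ E} log (v_i + v_j)`. -/
def polyaL (G : SimpleGraph (Fin m)) [DecidableRel G.Adj] (v : Fin m → ℝ) : ℝ :=
  -∑ i, v i + (1 / (G.edgeFinset.card : ℝ)) *
    ∑ e ∈ G.edgeFinset,
      Sym2.lift ⟨fun i j => Real.log (v i + v j), fun i j => by simp [add_comm]⟩ e

/-- The partial derivative `∂L/∂v_i = -1 + (1/N) ∑_{j ~ i} 1/(v_i+v_j)`. -/
def partialL (G : SimpleGraph (Fin m)) [DecidableRel G.Adj] (v : Fin m → ℝ) (i : Fin m) : ℝ :=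
  -1 + (1 / (G.edgeFinset.card : ℝ)) * ∑ j ∈ G.neighborFinset i, 1 / (v i + v j)

/-- The Jacobian matrix `JF(v)` of `F` at `v`. -/
def polyaJacobian (G : SimpleGraph (Fin m)) [DecidableRel G.Adj] (v : Fin m → ℝ) :
    Matrix (Fin m) (Fin m) ℝ :=
  Matrix.of fun i j => fderiv ℝ (fun x => polyaF G x i) v (Pi.single j 1)

/-- A point is unstable if its Jacobian matrix has an eigenvalue with strictly
positive real part. -/
def Unstable (G : SimpleGraph (Fin m)) [DecidableRel G.Adj] (v : Fin m → ℝ) : Prop :=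
  ∃ z : ℂ, z ∈ spectrum ℂ ((polyaJacobian G v).map Complex.ofReal) ∧ 0 < z.re

/-- `G` is balanced-bipartite if it admits a bipartition `V = A ∪ Aᶜ` with `#A = #Aᶜ`. -/
def BalancedBipartite (G : SimpleGraph (Fin m)) : Prop :=
  ∃ A : Finset (Fin m), (∀ i j, G.Adj i j → (i ∈ A ↔ j ∉ A)) ∧ A.card = Aᶜ.card

/-- The generalized Pólya urn process on `G`: at each step, for each edge `{i,j}` one
ball is added either to bin `i` or to bin `j`; conditionally on the past the ball goes
to `i` with probability `B_i(n)/(B_i(n)+B_j(n))` and the choices for distinct edges are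
conditionally independent (encoded by the product form of `condLaw`). -/
structure PolyaUrn (G : SimpleGraph (Fin m)) [DecidableRel G.Adj]
    (Ω : Type) [mΩ : MeasurableSpace Ω] (μ : Measure Ω) where
  /-- initial number of balls in each bin -/
  B₀ : Fin m → ℕ
  B₀_pos : ∀ i, 1 ≤ B₀ i
  /-- the filtration of the process -/
  ℱ : Filtration ℕ mΩ
  /-- `δ (n+1) i j` is the indicator that the ball added on edge `{i,j}` at step `n+1`
  goes to bin `i` -/
  δ : ℕ → Fin m → Fin m → Ω → ℕ
  /-- number of balls in each bin after step `n` -/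
  B : ℕ → Ω → Fin m → ℕ
  B_init : ∀ ω i, B 0 ω i = B₀ i
  B_step : ∀ n ω i, B (n + 1) ω i = B n ω i + ∑ j ∈ G.neighborFinset i, δ (n + 1) i j ω
  δ_sum : ∀ n i j ω, G.Adj i j → δ (n + 1) i j ω + δ (n + 1) j i ω = 1
  B_meas : ∀ n i, Measurable[ℱ n] fun ω => B n ω i
  δ_meas : ∀ n i j, Measurable[ℱ (n + 1)] fun ω => δ (n + 1) i j ω
  condLaw : ∀ n (s : Fin m → Fin m → ℕ),
    (μ[Set.indicator {ω | ∀ i j, G.Adj i j → i < j → δ (n + 1) i j ω = s i j}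
        (fun _ => (1 : ℝ)) | ℱ n])
      =ᵐ[μ] fun ω => ∏ i, ∏ j ∈ (G.neighborFinset i).filter (fun j => i < j),
        (if s i j = 1 then (B n ω i : ℝ) / ((B n ω i : ℝ) + (B n ω j : ℝ))
         else if s i j = 0 then (B n ω j : ℝ) / ((B n ω i : ℝ) + (B n ω j : ℝ)) else 0)

/-- The proportion of balls in each bin, `x_i(n) = B_i(n)/(N₀ + nN)`. -/
def PolyaUrn.x {G : SimpleGraph (Fin m)} [DecidableRel G.Adj] {Ω : Type}
    [mΩ : MeasurableSpace Ω] {μ : Measure Ω} (U : PolyaUrn G Ω μ) (n : ℕ) (ω : Ω) :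
    Fin m → ℝ :=
  fun i => (U.B n ω i : ℝ) / ((∑ j, U.B₀ j + n * G.edgeFinset.card : ℕ) : ℝ)

end GPU

namespace GPU

/-- Projection as a continuous linear map, specialized. -/
def pr {m : ℕ} (a : Fin m) : (Fin m → ℝ) →L[ℝ] ℝ := ContinuousLinearMap.proj a

lemma pr_apply {m : ℕ} (a : Fin m) (x : Fin m → ℝ) : pr a x = x a := rfl

lemma polyaF_eq_mul {m : ℕ} (G : SimpleGraph (Fin m)) [DecidableRel G.Adj]
    (x : Fin m → ℝ) (i : Fin m) : polyaF G x i = x i * partialL G x i := by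
  simp only [polyaF, partialL, mul_add, mul_neg_one]
  congr 1
  rw [← mul_assoc, mul_comm (x i), mul_assoc]
  congr 1
  rw [Finset.mul_sum]
  exact Finset.sum_congr rfl fun j _ => (mul_one_div _ _).symm

lemma jac_apply {m : ℕ} (G : SimpleGraph (Fin m)) [DecidableRel G.Adj] (v : Fin m → ℝ)
    (hpos : ∀ i j, G.Adj i j → 0 < v i + v j) (i k : Fin m) :
    polyaJacobian G v i k =
      (if i = k then partialL G v i else 0) +
        v i * (-(1 / (G.edgeFinset.card : ℝ)) * ∑ j ∈ G.neighborFinset i,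
          ((if i = k then (1:ℝ) else 0) + (if j = k then 1 else 0)) / (v i + v j) ^ 2) := by
  classical
  have hproj : ∀ a : Fin m, HasFDerivAt (fun x : Fin m → ℝ => x a) (pr a) v :=
    fun a => hasFDerivAt_apply (𝕜 := ℝ) a v
  have hterm : ∀ j ∈ G.neighborFinset i,
      HasFDerivAt (fun x : Fin m → ℝ => x i * (x i + x j)⁻¹)
        ((v i) • ((-((v i + v j) ^ 2)⁻¹) • (pr i + pr j)) + ((v i + v j)⁻¹) • pr i) v := by
    intro j hj
    have hne : v i + v j ≠ 0 := ne_of_gt (hpos i j (by simpa using hj))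
    have hs : HasFDerivAt (fun x : Fin m → ℝ => x i + x j) (pr i + pr j) v :=
      (hproj i).add (hproj j)
    have hinv := (hasDerivAt_inv hne).comp_hasFDerivAt v hs
    exact (hproj i).mul hinv
  have hsum := HasFDerivAt.fun_sum hterm
  have hFd := ((hproj i).fun_neg).fun_add (hsum.const_mul (1 / (G.edgeFinset.card : ℝ)))
  have hF : HasFDerivAt (fun x => polyaF G x i)
      (-(pr i) + (1 / (G.edgeFinset.card : ℝ)) •
        ∑ j ∈ G.neighborFinset i,
          ((v i) • ((-((v i + v j) ^ 2)⁻¹) • (pr i + pr j)) + ((v i + v j)⁻¹) • pr i)) v := by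
    simpa [polyaF, div_eq_mul_inv] using hFd
  rw [polyaJacobian, Matrix.of_apply, hF.fderiv]
  simp only [ContinuousLinearMap.add_apply, ContinuousLinearMap.neg_apply,
    ContinuousLinearMap.smul_apply, ContinuousLinearMap.coe_sum', Finset.sum_apply,
    pr_apply, smul_eq_mul, Pi.single_apply]
  by_cases hik : i = k
  · subst hik
    simp only [if_true, eq_self_iff_true, partialL, neg_mul, mul_neg, Finset.mul_sum,
      ← Finset.sum_neg_distrib, mul_one]
    rw [add_assoc, ← Finset.sum_add_distrib]
    congr 1
    refine Finset.sum_congr rfl fun j hj => ?_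
    ring
  · simp only [hik, if_false, if_true, eq_self_iff_true, neg_mul, mul_neg, Finset.mul_sum,
      ← Finset.sum_neg_distrib, mul_zero, zero_add, add_zero, neg_zero, mul_one]
    refine Finset.sum_congr rfl fun j hj => ?_
    ring

/-- An equilibrium `v ∈ Λ` has a Jacobian eigenvalue with strictly
positive real part if and only if some coordinate `i` has `v_i = 0` and
`∂L/∂v_i(v) > 0`. -/
theorem unstable_iff_exists_zero_coord_pos_partialL
    (m : ℕ) (G : SimpleGraph (Fin m)) [DecidableRel G.Adj] (hconn : G.Connected)
    (c : ℝ) (hc0 : 0 < c) (hc1 : c < 1 / (G.edgeFinset.card : ℝ))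
    (v : Fin m → ℝ) (hv : v ∈ equilibria G c) :
    Unstable G v ↔ ∃ i : Fin m, v i = 0 ∧ 0 < partialL G v i := by
  classical
  obtain ⟨⟨hv0, hsum1, hedge⟩, hFeq⟩ := hv
  have hpos : ∀ i j, G.Adj i j → 0 < v i + v j := fun i j h => hc0.trans_le (hedge i j h)
  set C : ℝ := 1 / (G.edgeFinset.card : ℝ) with hC
  have hCnn : (0:ℝ) ≤ C := by positivity
  have hgz : ∀ i, v i ≠ 0 → partialL G v i = 0 := by
    intro i hvi
    have h0 : polyaF G v i = 0 := congrFun hFeq i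
    rw [polyaF_eq_mul] at h0
    exact (mul_eq_zero.mp h0).resolve_left hvi
  set M : Matrix (Fin m) (Fin m) ℂ := (polyaJacobian G v).map Complex.ofReal with hM
  -- row formula for the complexified Jacobian
  have hrow : ∀ (u : Fin m → ℂ) (i : Fin m), M.mulVec u i
      = (partialL G v i : ℂ) * u i +
        (v i : ℂ) * (-(C : ℂ) * ∑ j ∈ G.neighborFinset i,
          (u i + u j) / ((v i : ℂ) + (v j : ℂ)) ^ 2) := by
    intro u i
    have hLHS : M.mulVec u i = ∑ k, ((polyaJacobian G v i k : ℝ) : ℂ) * u k := by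
      simp [hM, Matrix.mulVec, dotProduct, Matrix.map_apply]
    rw [hLHS]
    have h1 : ∀ k, ((polyaJacobian G v i k : ℝ) : ℂ) * u k =
        (if i = k then (partialL G v i : ℂ) * u k else 0) +
        ∑ j ∈ G.neighborFinset i, (v i : ℂ) * (-(C : ℂ)) *
          (((if i = k then (1:ℂ) else 0) + (if j = k then 1 else 0)) * u k
            / ((v i : ℂ) + (v j : ℂ)) ^ 2) := by
      intro k
      rw [jac_apply G v hpos, ← hC]
      push_cast [apply_ite (Complex.ofReal)]
      rw [add_mul, ite_mul, zero_mul, Finset.mul_sum, Finset.mul_sum, Finset.sum_mul]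
      congr 1
      exact Finset.sum_congr rfl fun j _ => by push_cast; ring
    simp only [h1]
    rw [Finset.sum_add_distrib]
    congr 1
    · simp
    · rw [Finset.sum_comm]
      rw [Finset.mul_sum, Finset.mul_sum]
      refine Finset.sum_congr rfl fun j hj => ?_
      have hk : ∑ k, (((if i = k then (1:ℂ) else 0) + (if j = k then 1 else 0)) * u k) =
          u i + u j := by
        simp [add_mul, ite_mul, Finset.sum_add_distrib]
      rw [← Finset.mul_sum, ← Finset.sum_div, hk]
      ring
  constructor
  · rintro ⟨z, hz, hzre⟩
    by_contra hno
    push_neg at hno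
    -- extract an eigenvector
    rw [spectrum.mem_iff] at hz
    have hdet : (algebraMap ℂ (Matrix (Fin m) (Fin m) ℂ) z - M).det = 0 := by
      by_contra hd
      exact hz ((Matrix.isUnit_iff_isUnit_det _).mpr (Ne.isUnit hd))
    obtain ⟨u, hune, hu0⟩ := Matrix.exists_mulVec_eq_zero_iff.mpr hdet
    have heig : ∀ i, M.mulVec u i = z * u i := by
      intro i
      have h := congrFun hu0 i
      simp only [Matrix.sub_mulVec, Pi.sub_apply, Algebra.algebraMap_eq_smul_one,
        Matrix.smul_mulVec, Matrix.one_mulVec, Pi.smul_apply, smul_eq_mul,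
        Pi.zero_apply, sub_eq_zero] at h
      exact h.symm
    by_cases hA : ∃ i, v i = 0 ∧ u i ≠ 0
    · obtain ⟨i, hvi, hui⟩ := hA
      have h := (heig i).symm.trans (hrow u i)
      rw [hvi] at h
      push_cast at h
      rw [zero_mul, add_zero] at h
      have hzg : z = (partialL G v i : ℂ) := mul_right_cancel₀ hui h
      have : z.re = partialL G v i := by rw [hzg, Complex.ofReal_re]
      have := hno i hvi
      linarith
    · push_neg at hA
      -- quadratic form argument
      have hz' : ∀ i, z * u i = (v i : ℂ) *
          (-(C : ℂ) * ∑ j ∈ G.neighborFinset i, (u i + u j) / ((v i : ℂ) + (v j : ℂ)) ^ 2) := by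
        intro i
        by_cases hvi : v i = 0
        · simp [hA i hvi, hvi]
        · have h := (heig i).symm.trans (hrow u i)
          rw [hgz i hvi] at h
          push_cast at h
          rw [zero_mul, zero_add] at h
          exact h
      set p : ℝ := ∑ i, Complex.normSq (u i) / v i with hp
      set T : ℂ := ∑ i, ∑ j ∈ G.neighborFinset i,
        (starRingEnd ℂ) (u i) * (u i + u j) / ((v i : ℂ) + (v j : ℂ)) ^ 2 with hT
      set t0 : ℝ := ∑ i, ∑ j ∈ G.neighborFinset i,
        Complex.normSq (u i + u j) / (v i + v j) ^ 2 with ht0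
      have ht0nn : 0 ≤ t0 := by
        refine Finset.sum_nonneg fun i _ => Finset.sum_nonneg fun j _ => ?_
        exact div_nonneg (Complex.normSq_nonneg _) (sq_nonneg _)
      -- symmetrization
      have hswap : ∀ f : Fin m → Fin m → ℂ,
          ∑ i, ∑ j ∈ G.neighborFinset i, f i j = ∑ i, ∑ j ∈ G.neighborFinset i, f j i := by
        intro f
        have h1 : ∀ g : Fin m → Fin m → ℂ,
            ∑ i, ∑ j ∈ G.neighborFinset i, g i j
              = ∑ i, ∑ j, if G.Adj i j then g i j else 0 := by
          intro g
          refine Finset.sum_congr rfl fun i _ => ?_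
          rw [SimpleGraph.neighborFinset_eq_filter, Finset.sum_filter]
        rw [h1, h1, Finset.sum_comm]
        refine Finset.sum_congr rfl fun i _ => Finset.sum_congr rfl fun j _ => ?_
        exact if_congr (G.adj_comm _ _) rfl rfl
      have hTT : T + T = (t0 : ℂ) := by
        have h2 : T = ∑ i, ∑ j ∈ G.neighborFinset i,
            (starRingEnd ℂ) (u j) * (u i + u j) / ((v i : ℂ) + (v j : ℂ)) ^ 2 := by
          rw [hT, hswap (fun i j =>
            (starRingEnd ℂ) (u i) * (u i + u j) / ((v i : ℂ) + (v j : ℂ)) ^ 2)]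
          refine Finset.sum_congr rfl fun i _ => Finset.sum_congr rfl fun j _ => ?_
          ring
        nth_rewrite 2 [h2]
        rw [hT, ht0, ← Finset.sum_add_distrib]
        push_cast
        refine Finset.sum_congr rfl fun i _ => ?_
        rw [← Finset.sum_add_distrib]
        refine Finset.sum_congr rfl fun j _ => ?_
        rw [← add_div, ← add_mul, ← map_add, ← Complex.normSq_eq_conj_mul_self]
      -- the key identity z * p = -C * T
      have hkey : z * (p : ℂ) = -(C : ℂ) * T := by
        have hper : ∀ i, z * ((Complex.normSq (u i) / v i : ℝ) : ℂ) =
            (starRingEnd ℂ) (u i) *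
              (-(C : ℂ) * ∑ j ∈ G.neighborFinset i, (u i + u j) / ((v i : ℂ) + (v j : ℂ)) ^ 2) := by
          intro i
          by_cases hvi : v i = 0
          · rw [hA i hvi, hvi]
            simp
          · have hvic : ((v i : ℝ) : ℂ) ≠ 0 := Complex.ofReal_ne_zero.mpr hvi
            rw [Complex.ofReal_div, Complex.normSq_eq_conj_mul_self]
            have h := hz' i
            field_simp
            linear_combination (starRingEnd ℂ) (u i) * h
        rw [hp]
        push_cast
        rw [Finset.mul_sum]
        calc (∑ i, z * ((Complex.normSq (u i) : ℂ) / (v i : ℂ)))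
            = ∑ i, (starRingEnd ℂ) (u i) *
              (-(C : ℂ) * ∑ j ∈ G.neighborFinset i, (u i + u j) / ((v i : ℂ) + (v j : ℂ)) ^ 2) := by
              refine Finset.sum_congr rfl fun i _ => ?_
              have := hper i
              push_cast at this
              exact this
          _ = -(C : ℂ) * T := by
              rw [hT]
              simp only [Finset.mul_sum]
              refine Finset.sum_congr rfl fun i _ => Finset.sum_congr rfl fun j _ => ?_
              ring
      -- positivity of p
      have hppos : 0 < p := by
        obtain ⟨i0, hi0⟩ := Function.ne_iff.mp hune
        have hvi0 : v i0 ≠ 0 := fun h => hi0 (hA i0 h)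
        have hvi0' : 0 < v i0 := lt_of_le_of_ne (hv0 i0) (Ne.symm hvi0)
        refine Finset.sum_pos' (fun i _ => div_nonneg (Complex.normSq_nonneg _) (hv0 i)) ?_
        exact ⟨i0, Finset.mem_univ i0, div_pos (Complex.normSq_pos.mpr hi0) hvi0'⟩
      -- conclude z is a nonpositive real
      have h2 : z * ((2 * p : ℝ) : ℂ) = ((-(C * t0) : ℝ) : ℂ) := by
        push_cast
        linear_combination 2 * hkey - (C : ℂ) * hTT
      have hp2 : ((2 * p : ℝ) : ℂ) ≠ 0 := by
        rw [Complex.ofReal_ne_zero]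
        positivity
      have hzval : z = ((-(C * t0) / (2 * p) : ℝ) : ℂ) := by
        rw [eq_comm, Complex.ofReal_div]
        rw [div_eq_iff hp2, eq_comm]
        exact h2
      have hre : z.re = -(C * t0) / (2 * p) := by rw [hzval, Complex.ofReal_re]
      have : -(C * t0) / (2 * p) ≤ 0 := by
        apply div_nonpos_of_nonpos_of_nonneg
        · nlinarith
        · linarith
      linarith [hzre, hre.symm ▸ this]
  · rintro ⟨i, hvi, hgi⟩
    refine ⟨(partialL G v i : ℂ), ?_, by simpa using hgi⟩
    rw [spectrum.mem_iff]
    intro hunit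
    rw [Matrix.isUnit_iff_isUnit_det] at hunit
    have hdet : (algebraMap ℂ (Matrix (Fin m) (Fin m) ℂ) ((partialL G v i : ℝ) : ℂ) - M).det
        = 0 := by
      apply Matrix.det_eq_zero_of_row_eq_zero i
      intro k
      rw [Matrix.sub_apply, Matrix.algebraMap_matrix_apply, hM, Matrix.map_apply,
        jac_apply G v hpos i k, hvi]
      push_cast
      by_cases h : i = k <;> simp [h]
    rw [hdet] at hunit
    exact (by simp : ¬IsUnit (0 : ℂ)) hunit


end GPU
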